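/- arXiv:2501.08058 — 3 statements merged into one kernel-verified Lean document; each statement's English description precedes it below -/
import Mathlib

section
/- Let k_a > 0, k_b > 0 and set Z = (−k_a, k_b). Let ξ : [0, ∞) → ℝ be continuous with ξ(0) ∈ Z, and let U : Z → ℝ be continuous and nonnegative with U(e) → +∞ as e → −k_a from the right and as e → k_b from the left. Suppose there is a constant c such that for every t ≥ 0, if ξ(s) ∈ Z for all s ∈ [0, t], then U(ξ(t)) ≤ c. Then ξ(t) ∈ Z for all t ≥ 0. -/
/-- (Trajectory-wise barrier Lyapunov invariance lemma.)
Let k_a, k_b > 0 and Z = (−k_a, k_b). If ξ : [0,∞) → ℝ is continuous with ξ(0) ∈ Z,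
U is continuous and nonnegative on Z and blows up at both endpoints of Z, and there
is a constant c such that U(ξ(t)) ≤ c whenever ξ stays in Z on [0, t], then
ξ(t) ∈ Z for all t ≥ 0. -/
theorem blf_invariance
    (ka kb : ℝ) (hka : 0 < ka) (hkb : 0 < kb)
    (ξ : ℝ → ℝ) (hξcont : ContinuousOn ξ (Set.Ici 0))
    (hξ0 : ξ 0 ∈ Set.Ioo (-ka) kb)
    (U : ℝ → ℝ) (hUcont : ContinuousOn U (Set.Ioo (-ka) kb))
    (hUnonneg : ∀ e ∈ Set.Ioo (-ka) kb, 0 ≤ U e)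
    (hUtop_left : Filter.Tendsto U (nhdsWithin (-ka) (Set.Ioi (-ka))) Filter.atTop)
    (hUtop_right : Filter.Tendsto U (nhdsWithin kb (Set.Iio kb)) Filter.atTop)
    (c : ℝ)
    (hbound : ∀ t ≥ (0 : ℝ), (∀ s ∈ Set.Icc 0 t, ξ s ∈ Set.Ioo (-ka) kb) → U (ξ t) ≤ c) :
    ∀ t ≥ (0 : ℝ), ξ t ∈ Set.Ioo (-ka) kb := by
  by_contra hcon
  push_neg at hcon
  obtain ⟨t₀, ht₀, ht₀out⟩ := hcon
  set S : Set ℝ := {t | 0 ≤ t ∧ ξ t ∉ Set.Ioo (-ka) kb} with hS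
  have hSne : S.Nonempty := ⟨t₀, ht₀, ht₀out⟩
  have hSbdd : BddBelow S := ⟨0, fun x hx => hx.1⟩
  set T := sInf S with hT
  have hSclosed : IsClosed S := by
    have heq : S = Set.Ici (0:ℝ) ∩ ξ ⁻¹' (Set.Ioo (-ka) kb)ᶜ := by
      ext x
      simp only [hS, Set.mem_setOf_eq, Set.mem_inter_iff, Set.mem_Ici, Set.mem_preimage,
        Set.mem_compl_iff]
    rw [heq]
    exact ContinuousOn.preimage_isClosed_of_isClosed hξcont isClosed_Ici
      isOpen_Ioo.isClosed_compl
  have hTmem : T ∈ S := hSclosed.csInf_mem hSne hSbdd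
  have hT0 : (0:ℝ) ≤ T := hTmem.1
  have hTpos : 0 < T := by
    rcases hT0.lt_or_eq with h | h
    · exact h
    · exact absurd hξ0 (h ▸ hTmem.2)
  have hin : ∀ t, 0 ≤ t → t < T → ξ t ∈ Set.Ioo (-ka) kb := by
    intro t h0 hlt
    by_contra hout
    exact absurd (csInf_le hSbdd ⟨h0, hout⟩) (not_le.mpr hlt)
  have hbnd : ∀ t, 0 ≤ t → t < T → U (ξ t) ≤ c := by
    intro t h0 hlt
    exact hbound t h0 (fun s hs => hin s hs.1 (lt_of_le_of_lt hs.2 hlt))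
  have hcw : Filter.Tendsto ξ (nhdsWithin T (Set.Iio T)) (nhds (ξ T)) := by
    have h1 : ContinuousWithinAt ξ (Set.Ico 0 T) T :=
      (hξcont T hT0).mono (fun x hx => hx.1)
    have h2 : nhdsWithin T (Set.Ico 0 T) = nhdsWithin T (Set.Iio T) :=
      nhdsWithin_Ico_eq_nhdsLT hTpos
    rwa [ContinuousWithinAt, h2] at h1
  have hposev : ∀ᶠ t in nhdsWithin T (Set.Iio T), 0 < t :=
    eventually_nhdsWithin_of_eventually_nhds (eventually_gt_nhds hTpos)
  have hev : ∀ᶠ t in nhdsWithin T (Set.Iio T), ξ t ∈ Set.Ioo (-ka) kb := by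
    filter_upwards [hposev, self_mem_nhdsWithin] with t h1 h2
    exact hin t h1.le h2
  have hbev : ∀ᶠ t in nhdsWithin T (Set.Iio T), U (ξ t) ≤ c := by
    filter_upwards [hposev, self_mem_nhdsWithin] with t h1 h2
    exact hbnd t h1.le h2
  have hIcc : ξ T ∈ Set.Icc (-ka) kb := by
    have hmem : ∀ᶠ t in nhdsWithin T (Set.Iio T), ξ t ∈ Set.Icc (-ka) kb := by
      filter_upwards [hev] with t ht using ⟨ht.1.le, ht.2.le⟩
    exact isClosed_Icc.mem_of_tendsto hcw hmem
  have hend : ξ T = -ka ∨ ξ T = kb := by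
    rcases hIcc.1.eq_or_lt with h | h
    · exact Or.inl h.symm
    rcases hIcc.2.eq_or_lt with h' | h'
    · exact Or.inr h'
    · exact absurd ⟨h, h'⟩ hTmem.2
  have htop : Filter.Tendsto (fun t => U (ξ t)) (nhdsWithin T (Set.Iio T)) Filter.atTop := by
    rcases hend with h | h
    · have : Filter.Tendsto ξ (nhdsWithin T (Set.Iio T))
          (nhdsWithin (-ka) (Set.Ioi (-ka))) := by
        apply tendsto_nhdsWithin_of_tendsto_nhds_of_eventually_within
        · rwa [h] at hcw
        · filter_upwards [hev] with t ht using ht.1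
      exact hUtop_left.comp this
    · have : Filter.Tendsto ξ (nhdsWithin T (Set.Iio T))
          (nhdsWithin kb (Set.Iio kb)) := by
        apply tendsto_nhdsWithin_of_tendsto_nhds_of_eventually_within
        · rwa [h] at hcw
        · filter_upwards [hev] with t ht using ht.2
      exact hUtop_right.comp this
  have hgt : ∀ᶠ t in nhdsWithin T (Set.Iio T), c < U (ξ t) :=
    htop.eventually_gt_atTop c
  have : ∀ᶠ t in nhdsWithin T (Set.Iio T), False := by
    filter_upwards [hgt, hbev] with t h1 h2 using absurd h2 (not_le.mpr h1)
  exact this.exists.elim (fun _ h => h)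
end

section
/- Fix t ≥ 0 with r(t) ∈ (r_i, r_o), and suppose x, y, θ are differentiable at t with ẋ(t) = v·cos θ(t), ẏ(t) = v·sin θ(t) and θ̇(t) = ω(t), where ω(t) = v/d + v·k₁·Ω(v·ē_x(t)) + v·k₂·((r(t) − d)/r(t))·η(r(t) − d). Then the function t ↦ V₁(t) = (1/2)(ē_x(t)² + ē_y(t)²) + d·k₂·V_r(r(t) − d) is differentiable at t with derivative −d·k₁·(v·ē_x(t))·Ω(v·ē_x(t)); in particular this derivative is ≤ 0. -/
/-- Range r(t) = √((x(t) − x_T)² + (y(t) − y_T)²). -/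
noncomputable def rng (x y : ℝ → ℝ) (xT yT : ℝ) (t : ℝ) : ℝ :=
  Real.sqrt ((x t - xT) ^ 2 + (y t - yT) ^ 2)

/-- Transformed error ē_x(t) = (x(t) − x_T)·cos θ(t) + (y(t) − y_T)·sin θ(t). -/
noncomputable def ebx (x y θ : ℝ → ℝ) (xT yT : ℝ) (t : ℝ) : ℝ :=
  (x t - xT) * Real.cos (θ t) + (y t - yT) * Real.sin (θ t)

/-- Transformed error ē_y(t) = −(x(t) − x_T)·sin θ(t) + (y(t) − y_T)·cos θ(t) + d. -/
noncomputable def eby (x y θ : ℝ → ℝ) (xT yT d : ℝ) (t : ℝ) : ℝ :=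
  -(x t - xT) * Real.sin (θ t) + (y t - yT) * Real.cos (θ t) + d

/-- The asymmetric barrier Lyapunov function V_r. -/
noncomputable def Vr (δa δb e : ℝ) : ℝ :=
  if 0 < e then (1 / 2) * Real.log (δb ^ 2 / (δb ^ 2 - e ^ 2))
  else (1 / 2) * Real.log (δa ^ 2 / (δa ^ 2 - e ^ 2))

/-- η(e) = 1/(δ_b² − e²) for e > 0 and η(e) = 1/(δ_a² − e²) for e ≤ 0. -/
noncomputable def eta (δa δb e : ℝ) : ℝ :=
  if 0 < e then 1 / (δb ^ 2 - e ^ 2) else 1 / (δa ^ 2 - e ^ 2)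

lemma F_hasDerivAt (δ p : ℝ) (h : δ ^ 2 - p ^ 2 ≠ 0) :
    HasDerivAt (fun s => (1/2) * (Real.log (δ ^ 2) - Real.log (δ ^ 2 - s ^ 2)))
      (p / (δ ^ 2 - p ^ 2)) p := by
  have h1 : HasDerivAt (fun s : ℝ => δ ^ 2 - s ^ 2) (-(2 * p)) p := by
    simpa using (hasDerivAt_pow 2 p).const_sub (δ ^ 2)
  have h2 := h1.log h
  have h3 := ((hasDerivAt_const p (Real.log (δ ^ 2))).sub h2).const_mul (1/2 : ℝ)
  refine h3.congr_deriv (Eq.symm ?_)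
  field_simp
  ring

lemma Vr_hasDerivAt (δa δb e : ℝ) (ha : 0 < δa) (hb : 0 < δb)
    (h1 : -δa < e) (h2 : e < δb) :
    HasDerivAt (Vr δa δb) (e * eta δa δb e) e := by
  rcases lt_trichotomy e 0 with he | he | he
  · -- e < 0
    have hne : δa ^ 2 - e ^ 2 ≠ 0 := by nlinarith
    have key := F_hasDerivAt δa e hne
    have hev : Vr δa δb =ᶠ[nhds e] (fun s => (1/2) * (Real.log (δa ^ 2) - Real.log (δa ^ 2 - s ^ 2))) := by
      filter_upwards [Ioo_mem_nhds h1 he] with s hs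
      have hs2 : 0 < δa ^ 2 - s ^ 2 := by nlinarith [hs.1, hs.2]
      rw [Vr, if_neg (not_lt.mpr hs.2.le), Real.log_div (by positivity) (ne_of_gt hs2)]
    have := key.congr_of_eventuallyEq hev
    refine this.congr_deriv (Eq.symm ?_)
    rw [eta, if_neg (not_lt.mpr he.le)]
    ring
  · -- e = 0
    subst he
    have hbne : δb ^ 2 - (0:ℝ) ^ 2 ≠ 0 := by nlinarith
    have hane : δa ^ 2 - (0:ℝ) ^ 2 ≠ 0 := by nlinarith
    have hV0 : Vr δa δb 0 = 0 := by
      rw [Vr, if_neg (lt_irrefl 0)]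
      simp only [ne_eq, OfNat.ofNat_ne_zero, not_false_eq_true, zero_pow, sub_zero]
      rw [div_self (by positivity : δa ^ 2 ≠ 0), Real.log_one, mul_zero]
    have hR : HasDerivWithinAt (Vr δa δb) 0 (Set.Ici 0) 0 := by
      have key := (F_hasDerivAt δb 0 hbne).hasDerivWithinAt (s := Set.Ici (0:ℝ))
      have hmem : Set.Ioo (-δb) δb ∈ nhdsWithin (0:ℝ) (Set.Ici 0) :=
        nhdsWithin_le_nhds (Ioo_mem_nhds (by linarith) hb)
      have hev : Vr δa δb =ᶠ[nhdsWithin (0:ℝ) (Set.Ici 0)]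
          (fun s => (1/2) * (Real.log (δb ^ 2) - Real.log (δb ^ 2 - s ^ 2))) := by
        filter_upwards [self_mem_nhdsWithin, hmem] with s hs1 hs2
        rcases eq_or_lt_of_le (Set.mem_Ici.mp hs1) with h0 | h0
        · rw [← h0, hV0]; simp
        · have hs2' : 0 < δb ^ 2 - s ^ 2 := by nlinarith [hs2.1, hs2.2]
          rw [Vr, if_pos h0, Real.log_div (by positivity) (ne_of_gt hs2')]
      have heq0 : Vr δa δb 0 = (1/2) * (Real.log (δb ^ 2) - Real.log (δb ^ 2 - (0:ℝ) ^ 2)) := by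
        rw [hV0]; simp
      have := key.congr_of_eventuallyEq hev heq0
      refine this.congr_deriv (Eq.symm ?_)
      simp
    have hL : HasDerivWithinAt (Vr δa δb) 0 (Set.Iic 0) 0 := by
      have key := (F_hasDerivAt δa 0 hane).hasDerivWithinAt (s := Set.Iic (0:ℝ))
      have hmem : Set.Ioo (-δa) δa ∈ nhdsWithin (0:ℝ) (Set.Iic 0) :=
        nhdsWithin_le_nhds (Ioo_mem_nhds (by linarith) ha)
      have hev : Vr δa δb =ᶠ[nhdsWithin (0:ℝ) (Set.Iic 0)]
          (fun s => (1/2) * (Real.log (δa ^ 2) - Real.log (δa ^ 2 - s ^ 2))) := by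
        filter_upwards [self_mem_nhdsWithin, hmem] with s hs1 hs2
        have hs2' : 0 < δa ^ 2 - s ^ 2 := by nlinarith [hs2.1, hs2.2]
        rw [Vr, if_neg (not_lt.mpr (hs1 : s ≤ 0)), Real.log_div (by positivity) (ne_of_gt hs2')]
      have heq0 : Vr δa δb 0 = (1/2) * (Real.log (δa ^ 2) - Real.log (δa ^ 2 - (0:ℝ) ^ 2)) := by
        rw [hV0]; simp
      have := key.congr_of_eventuallyEq hev heq0
      refine this.congr_deriv (Eq.symm ?_)
      simp
    have hU := hL.union hR
    rw [Set.Iic_union_Ici] at hU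
    have := hU.hasDerivAt (by simp)
    simpa using this
  · -- 0 < e
    have hne : δb ^ 2 - e ^ 2 ≠ 0 := by nlinarith
    have key := F_hasDerivAt δb e hne
    have hev : Vr δa δb =ᶠ[nhds e] (fun s => (1/2) * (Real.log (δb ^ 2) - Real.log (δb ^ 2 - s ^ 2))) := by
      filter_upwards [Ioo_mem_nhds he h2] with s hs
      have hs2 : 0 < δb ^ 2 - s ^ 2 := by nlinarith [hs.1, hs.2]
      rw [Vr, if_pos hs.1, Real.log_div (by positivity) (ne_of_gt hs2)]
    have := key.congr_of_eventuallyEq hev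
    refine this.congr_deriv (Eq.symm ?_)
    rw [eta, if_pos he]
    ring

/-- Along the closed-loop dynamics with the range and range-rate based
controller, the joint Lyapunov function
V₁(t) = (1/2)(ē_x(t)² + ē_y(t)²) + d·k₂·V_r(r(t) − d)
is differentiable at t with derivative −d·k₁·(v·ē_x(t))·Ω(v·ē_x(t)) ≤ 0. -/
theorem V1_derivative
    (x y θ : ℝ → ℝ) (Ω : ℝ → ℝ) (v d k1 k2 ri ro xT yT t : ℝ)
    (hΩcont : Continuous Ω) (hΩ0 : Ω 0 = 0) (hΩpos : ∀ s : ℝ, s ≠ 0 → 0 < s * Ω s)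
    (hv : v ≠ 0) (hri : 0 < ri) (hrid : ri < d) (hdro : d < ro)
    (hk1 : 0 < k1) (hk2 : 0 < k2) (ht : 0 ≤ t)
    (hr : rng x y xT yT t ∈ Set.Ioo ri ro)
    (hx : HasDerivAt x (v * Real.cos (θ t)) t)
    (hy : HasDerivAt y (v * Real.sin (θ t)) t)
    (hθ : HasDerivAt θ (v / d + v * k1 * Ω (v * ebx x y θ xT yT t) +
      v * k2 * ((rng x y xT yT t - d) / rng x y xT yT t) *
        eta (d - ri) (ro - d) (rng x y xT yT t - d)) t) :
    HasDerivAt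
      (fun s => (1 / 2) * ((ebx x y θ xT yT s) ^ 2 + (eby x y θ xT yT d s) ^ 2) +
        d * k2 * Vr (d - ri) (ro - d) (rng x y xT yT s - d))
      (-(d * k1 * (v * ebx x y θ xT yT t) * Ω (v * ebx x y θ xT yT t))) t ∧
    -(d * k1 * (v * ebx x y θ xT yT t) * Ω (v * ebx x y θ xT yT t)) ≤ 0 := by
  obtain ⟨hri', hro'⟩ := hr
  have hd0 : 0 < d := lt_trans hri hrid
  have hr0 : 0 < rng x y xT yT t := lt_trans hri hri'
  set W : ℝ := v / d + v * k1 * Ω (v * ebx x y θ xT yT t) +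
      v * k2 * ((rng x y xT yT t - d) / rng x y xT yT t) *
        eta (d - ri) (ro - d) (rng x y xT yT t - d) with hWdef
  set r : ℝ := rng x y xT yT t with hrdef
  set cθ : ℝ := Real.cos (θ t) with hc
  set sθ : ℝ := Real.sin (θ t) with hs
  set X : ℝ := x t - xT with hX
  set Y : ℝ := y t - yT with hY
  set E : ℝ := ebx x y θ xT yT t with hE
  set Ey : ℝ := eby x y θ xT yT d t with hEy
  set η : ℝ := eta (d - ri) (ro - d) (r - d) with hη
  set O : ℝ := Ω (v * E) with hO
  have hEval : E = X * cθ + Y * sθ := rfl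
  have hEyval : Ey = -X * sθ + Y * cθ + d := rfl
  have hpyth : cθ ^ 2 + sθ ^ 2 = 1 := by
    rw [hc, hs]; exact Real.cos_sq_add_sin_sq (θ t)
  -- derivative of ebx
  have D1 : HasDerivAt (fun s => (x s - xT) * Real.cos (θ s) + (y s - yT) * Real.sin (θ s))
      (v + (Ey - d) * W) t := by
    have := ((hx.sub_const xT).mul hθ.cos).add ((hy.sub_const yT).mul hθ.sin)
    refine this.congr_deriv (Eq.symm ?_)
    simp only [← hc, ← hs, ← hX, ← hY]
    rw [hEyval]
    linear_combination (-v) * hpyth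
  -- derivative of eby (without the +d)
  have D2 : HasDerivAt (fun s => -(x s - xT) * Real.sin (θ s) + (y s - yT) * Real.cos (θ s) + d)
      (-E * W) t := by
    have := (((hx.sub_const xT).neg.mul hθ.sin).add ((hy.sub_const yT).mul hθ.cos)).add_const d
    refine this.congr_deriv (Eq.symm ?_)
    simp only [Pi.neg_apply, ← hc, ← hs, ← hX, ← hY]
    rw [hEval]
    ring
  -- derivative of rng
  have hu : HasDerivAt (fun s => (x s - xT) ^ 2 + (y s - yT) ^ 2)
      (2 * X ^ 1 * (v * cθ) + 2 * Y ^ 1 * (v * sθ)) t := by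
    have h1 := (hx.sub_const xT).pow 2
    have h2 := (hy.sub_const yT).pow 2
    have := h1.add h2
    refine this.congr_deriv (Eq.symm ?_)
    norm_num [hX, hY]
  have hut : Real.sqrt ((x t - xT) ^ 2 + (y t - yT) ^ 2) = r := rfl
  have hune : (x t - xT) ^ 2 + (y t - yT) ^ 2 ≠ 0 := by
    intro h
    rw [rng] at hrdef
    rw [hrdef, h, Real.sqrt_zero] at hr0
    exact lt_irrefl 0 hr0
  have D3 : HasDerivAt (fun s => rng x y xT yT s) (v * E / r) t := by
    have := hu.sqrt hune
    simp only [rng]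
    convert this using 1
    rw [hut, hEval, hX, hY]
    have : r ≠ 0 := ne_of_gt hr0
    field_simp
  -- derivative of Vr term
  have hVd := Vr_hasDerivAt (d - ri) (ro - d) (r - d) (by linarith) (by linarith)
    (by simp only [hrdef]; linarith) (by simp only [hrdef]; linarith)
  have D4 : HasDerivAt (fun s => Vr (d - ri) (ro - d) (rng x y xT yT s - d))
      ((r - d) * η * (v * E / r)) t := by
    have := HasDerivAt.comp t hVd (D3.sub_const d)
    exact this
  -- assemble
  have Dtot := (((D1.pow 2).add (D2.pow 2)).const_mul (1/2 : ℝ)).add (D4.const_mul (d * k2))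
  constructor
  · have hgoal : HasDerivAt
        (fun s => (1 / 2) * (((x s - xT) * Real.cos (θ s) + (y s - yT) * Real.sin (θ s)) ^ 2 +
          (-(x s - xT) * Real.sin (θ s) + (y s - yT) * Real.cos (θ s) + d) ^ 2) +
          d * k2 * Vr (d - ri) (ro - d) (rng x y xT yT s - d))
        (-(d * k1 * (v * E) * O)) t := by
      refine Dtot.congr_deriv (Eq.symm ?_)
      have hE1 : ((x t - xT) * Real.cos (θ t) + (y t - yT) * Real.sin (θ t)) = E := rfl
      have hE2 : (-(x t - xT) * Real.sin (θ t) + (y t - yT) * Real.cos (θ t) + d) = Ey := rfl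
      rw [hE1, hE2, hWdef]
      have hrne : r ≠ 0 := ne_of_gt hr0
      have hdne : d ≠ 0 := ne_of_gt hd0
      push_cast
      field_simp
      ring
    exact hgoal
  · rcases eq_or_ne (v * E) 0 with h | h
    · rw [hO, h, hΩ0]
      simp
    · have := hΩpos _ h
      rw [hO]
      nlinarith [mul_pos (mul_pos hd0 hk1) this]
end

section
/- Fix t ≥ 0 with r(t) ∈ (r_i, r_o), and suppose x, y, θ, z are differentiable at t with ẋ(t) = v·cos θ(t), ẏ(t) = v·sin θ(t), ż(t) = −κ·z(t) + (1/2)·r(t)², and θ̇(t) = v/d + v·k₁·Ω(β(t)) + v·k₂·((r(t) − d)/r(t))·η(r(t) − d), where β(t) = −κ·z(t) + (1/2)·r(t)². Then the function t ↦ V₂(t) = (1/2)(ē_x(t)² + ē_y(t)²) + d·k₂·V_r(r(t) − d) + d·k₁·∫₀^{β(t)} Ω(τ) dτ is differentiable at t with derivative −d·κ·k₁·β(t)·Ω(β(t)); in particular this derivative is ≤ 0. -/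
/-- The estimation signal β(t) = −κ·z(t) + (1/2)·r(t)². -/
noncomputable def beta (x y : ℝ → ℝ) (z : ℝ → ℝ) (κ xT yT : ℝ) (t : ℝ) : ℝ :=
  -κ * z t + (1 / 2) * (rng x y xT yT t) ^ 2

lemma hasDerivAt_branch (c e0 : ℝ) (h : e0 ^ 2 < c ^ 2) :
    HasDerivAt (fun e => (1 / 2) * Real.log (c ^ 2 / (c ^ 2 - e ^ 2)))
      (e0 * (1 / (c ^ 2 - e0 ^ 2))) e0 := by
  have hc2 : (0:ℝ) < c ^ 2 := lt_of_le_of_lt (sq_nonneg _) h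
  have hden : (0:ℝ) < c ^ 2 - e0 ^ 2 := by linarith
  have hinner : HasDerivAt (fun e : ℝ => c ^ 2 - e ^ 2) (-(2 * e0)) e0 := by
    have := (hasDerivAt_pow 2 e0).const_sub (c ^ 2)
    simpa using this
  have hdiv : HasDerivAt (fun e : ℝ => c ^ 2 / (c ^ 2 - e ^ 2))
      ((0 * (c ^ 2 - e0 ^ 2) - c ^ 2 * (-(2 * e0))) / (c ^ 2 - e0 ^ 2) ^ 2) e0 :=
    (hasDerivAt_const e0 (c ^ 2)).div hinner (ne_of_gt hden)
  have hlog := hdiv.log (by positivity)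
  have := hlog.const_mul (1/2 : ℝ)
  refine this.congr_deriv ?_
  field_simp [show c ≠ 0 by rintro rfl; simp at hc2]
  ring

lemma hasDerivAt_Vr (δa δb e0 : ℝ) (ha : 0 < δa) (hb : 0 < δb)
    (h1 : -δa < e0) (h2 : e0 < δb) :
    HasDerivAt (Vr δa δb) (e0 * eta δa δb e0) e0 := by
  rcases lt_trichotomy e0 0 with hneg | hzero | hpos
  · have hsq : e0 ^ 2 < δa ^ 2 := by nlinarith
    have h := hasDerivAt_branch δa e0 hsq
    have heq : Vr δa δb =ᶠ[nhds e0] fun e => (1/2) * Real.log (δa ^ 2 / (δa ^ 2 - e ^ 2)) := by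
      filter_upwards [Iio_mem_nhds hneg] with e he
      simp [Vr, not_lt.mpr (le_of_lt (Set.mem_Iio.mp he))]
    rw [eta, if_neg (not_lt.mpr (le_of_lt hneg))]
    exact h.congr_of_eventuallyEq heq
  · subst hzero
    rw [eta, if_neg (lt_irrefl 0)]
    have hsa : (0:ℝ) ^ 2 < δa ^ 2 := by nlinarith
    have hsb : (0:ℝ) ^ 2 < δb ^ 2 := by nlinarith
    have hA := (hasDerivAt_branch δa 0 hsa).hasDerivWithinAt (s := Set.Iic 0)
    have hB := (hasDerivAt_branch δb 0 hsb).hasDerivWithinAt (s := Set.Ici 0)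
    have hA' : HasDerivWithinAt (Vr δa δb) (0 * (1 / (δa ^ 2 - 0 ^ 2))) (Set.Iic 0) 0 := by
      refine hA.congr (fun e he => ?_) ?_
      · simp [Vr, not_lt.mpr (Set.mem_Iic.mp he)]
      · simp [Vr]
    have hB' : HasDerivWithinAt (Vr δa δb) (0 * (1 / (δa ^ 2 - 0 ^ 2))) (Set.Ici 0) 0 := by
      have : (0:ℝ) * (1 / (δa ^ 2 - 0 ^ 2)) = 0 * (1 / (δb ^ 2 - 0 ^ 2)) := by ring
      rw [this]
      refine hB.congr (fun e he => ?_) ?_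
      · rcases eq_or_lt_of_le (Set.mem_Ici.mp he) with he0 | he0
        · simp [Vr, ← he0, div_self (ne_of_gt (by positivity : (0:ℝ) < δa ^ 2)),
            div_self (ne_of_gt (by positivity : (0:ℝ) < δb ^ 2))]
        · simp [Vr, he0]
      · simp [Vr, div_self (ne_of_gt (by positivity : (0:ℝ) < δa ^ 2)),
          div_self (ne_of_gt (by positivity : (0:ℝ) < δb ^ 2))]
    have := hA'.union hB'
    rw [Set.Iic_union_Ici] at this
    exact hasDerivWithinAt_univ.mp this
  · have hsq : e0 ^ 2 < δb ^ 2 := by nlinarith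
    have h := hasDerivAt_branch δb e0 hsq
    have heq : Vr δa δb =ᶠ[nhds e0] fun e => (1/2) * Real.log (δb ^ 2 / (δb ^ 2 - e ^ 2)) := by
      filter_upwards [Ioi_mem_nhds hpos] with e he
      simp [Vr, Set.mem_Ioi.mp he]
    rw [eta, if_pos hpos]
    exact h.congr_of_eventuallyEq heq


/-- Along the closed-loop dynamics with the range-only dynamic output
feedback controller, the joint Lyapunov function
V₂(t) = (1/2)(ē_x(t)² + ē_y(t)²) + d·k₂·V_r(r(t) − d) + d·k₁·∫₀^{β(t)} Ω(τ) dτ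
is differentiable at t with derivative −d·κ·k₁·β(t)·Ω(β(t)) ≤ 0. -/
theorem V2_derivative
    (x y θ z : ℝ → ℝ) (Ω : ℝ → ℝ) (v d k1 k2 κ ri ro xT yT t : ℝ)
    (hΩcont : Continuous Ω) (hΩ0 : Ω 0 = 0) (hΩpos : ∀ s : ℝ, s ≠ 0 → 0 < s * Ω s)
    (hv : v ≠ 0) (hri : 0 < ri) (hrid : ri < d) (hdro : d < ro)
    (hk1 : 0 < k1) (hk2 : 0 < k2) (hκ : 0 < κ) (ht : 0 ≤ t)
    (hr : rng x y xT yT t ∈ Set.Ioo ri ro)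
    (hx : HasDerivAt x (v * Real.cos (θ t)) t)
    (hy : HasDerivAt y (v * Real.sin (θ t)) t)
    (hz : HasDerivAt z (-κ * z t + (1 / 2) * (rng x y xT yT t) ^ 2) t)
    (hθ : HasDerivAt θ (v / d + v * k1 * Ω (beta x y z κ xT yT t) +
      v * k2 * ((rng x y xT yT t - d) / rng x y xT yT t) *
        eta (d - ri) (ro - d) (rng x y xT yT t - d)) t) :
    HasDerivAt
      (fun s => (1 / 2) * ((ebx x y θ xT yT s) ^ 2 + (eby x y θ xT yT d s) ^ 2) +
        d * k2 * Vr (d - ri) (ro - d) (rng x y xT yT s - d) +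
        d * k1 * ∫ τ in (0 : ℝ)..(beta x y z κ xT yT s), Ω τ)
      (-(d * κ * k1 * beta x y z κ xT yT t * Ω (beta x y z κ xT yT t))) t ∧
    -(d * κ * k1 * beta x y z κ xT yT t * Ω (beta x y z κ xT yT t)) ≤ 0 := by
  set r := rng x y xT yT t with hrdef
  have hrpos : 0 < r := lt_trans hri hr.1
  have hd : 0 < d := lt_trans hri hrid
  set θT : ℝ := v / d + v * k1 * Ω (beta x y z κ xT yT t) +
      v * k2 * ((r - d) / r) * eta (d - ri) (ro - d) (r - d) with hθT
  -- derivatives of position errors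
  have hP : HasDerivAt (fun s => x s - xT) (v * Real.cos (θ t)) t := hx.sub_const xT
  have hQ : HasDerivAt (fun s => y s - yT) (v * Real.sin (θ t)) t := hy.sub_const yT
  have hcos : HasDerivAt (fun s => Real.cos (θ s)) (-Real.sin (θ t) * θT) t :=
    (Real.hasDerivAt_cos (θ t)).comp t hθ
  have hsin : HasDerivAt (fun s => Real.sin (θ s)) (Real.cos (θ t) * θT) t :=
    (Real.hasDerivAt_sin (θ t)).comp t hθ
  -- derivative of ebx
  have hexraw : HasDerivAt (ebx x y θ xT yT)
      ((v * Real.cos (θ t) * Real.cos (θ t) + (x t - xT) * (-Real.sin (θ t) * θT)) +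
       (v * Real.sin (θ t) * Real.sin (θ t) + (y t - yT) * (Real.cos (θ t) * θT))) t := by
    have := (hP.mul hcos).add (hQ.mul hsin)
    exact this
  have hex : HasDerivAt (ebx x y θ xT yT)
      (v + (eby x y θ xT yT d t - d) * θT) t := by
    convert hexraw using 1
    simp only [eby]
    linear_combination (-v) * Real.sin_sq_add_cos_sq (θ t)
  -- derivative of eby
  have heyraw : HasDerivAt (eby x y θ xT yT d)
      (((-(v * Real.cos (θ t))) * Real.sin (θ t) + (-(x t - xT)) * (Real.cos (θ t) * θT)) +
       (v * Real.sin (θ t) * Real.cos (θ t) + (y t - yT) * (-Real.sin (θ t) * θT))) t := by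
    have := (((hP.neg).mul hsin).add (hQ.mul hcos)).add_const d
    exact this
  have hey : HasDerivAt (eby x y θ xT yT d) (-(ebx x y θ xT yT t) * θT) t := by
    convert heyraw using 1
    simp only [ebx]
    ring
  -- derivative of rng
  have harg : HasDerivAt (fun s => (x s - xT) ^ 2 + (y s - yT) ^ 2)
      (2 * (x t - xT) ^ 1 * (v * Real.cos (θ t)) + 2 * (y t - yT) ^ 1 * (v * Real.sin (θ t))) t := by
    have h1 := hP.pow 2
    have h2 := hQ.pow 2
    have h3 := h1.add h2
    simp only [Nat.cast_ofNat, Nat.add_one_sub_one, pow_one] at h3 ⊢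
    exact h3
  have hargpos : (0:ℝ) < (x t - xT) ^ 2 + (y t - yT) ^ 2 := by
    have := hrpos
    rw [hrdef, rng] at this
    exact Real.sqrt_pos.mp this
  have hrt : HasDerivAt (rng x y xT yT) (v * ebx x y θ xT yT t / r) t := by
    have h := harg.sqrt (ne_of_gt hargpos)
    have heq : (2 * (x t - xT) ^ 1 * (v * Real.cos (θ t)) + 2 * (y t - yT) ^ 1 * (v * Real.sin (θ t))) /
        (2 * Real.sqrt ((x t - xT) ^ 2 + (y t - yT) ^ 2)) = v * ebx x y θ xT yT t / r := by
      rw [hrdef, rng, ebx]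
      have hs : (0:ℝ) < Real.sqrt ((x t - xT) ^ 2 + (y t - yT) ^ 2) := Real.sqrt_pos.mpr hargpos
      field_simp
    rw [heq] at h
    exact h
  -- derivative of Vr term
  have hVrc : HasDerivAt (fun s => Vr (d - ri) (ro - d) (rng x y xT yT s - d))
      (((r - d) * eta (d - ri) (ro - d) (r - d)) * (v * ebx x y θ xT yT t / r)) t := by
    have hV := hasDerivAt_Vr (d - ri) (ro - d) (r - d)
      (by linarith) (by linarith) (by have := hr.1; linarith) (by have := hr.2; linarith)
    have := hV.comp t (hrt.sub_const d)
    simpa [Function.comp_def, mul_comm] using this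
  -- derivative of beta
  have hβ : HasDerivAt (beta x y z κ xT yT)
      (-κ * (-κ * z t + (1 / 2) * r ^ 2) + (1 / 2) * (2 * r ^ 1 * (v * ebx x y θ xT yT t / r))) t := by
    have h1 := hz.const_mul (-κ)
    have h2 := (hrt.pow 2).const_mul (1/2 : ℝ)
    exact h1.add h2
  -- derivative of integral term
  have hint : HasDerivAt (fun u => ∫ τ in (0:ℝ)..u, Ω τ) (Ω (beta x y z κ xT yT t))
      (beta x y z κ xT yT t) := by
    refine intervalIntegral.integral_hasDerivAt_right
      (hΩcont.intervalIntegrable _ _) ?_ hΩcont.continuousAt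
    exact hΩcont.stronglyMeasurable.stronglyMeasurableAtFilter
  have hintc : HasDerivAt (fun s => ∫ τ in (0:ℝ)..(beta x y z κ xT yT s), Ω τ)
      (Ω (beta x y z κ xT yT t) *
        (-κ * (-κ * z t + (1 / 2) * r ^ 2) + (1 / 2) * (2 * r ^ 1 * (v * ebx x y θ xT yT t / r)))) t :=
    hint.comp t hβ
  -- assemble
  have hsq : HasDerivAt (fun s => (ebx x y θ xT yT s) ^ 2 + (eby x y θ xT yT d s) ^ 2)
      (2 * ebx x y θ xT yT t ^ 1 * (v + (eby x y θ xT yT d t - d) * θT) +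
       2 * eby x y θ xT yT d t ^ 1 * (-(ebx x y θ xT yT t) * θT)) t :=
    (hex.pow 2).add (hey.pow 2)
  have htotal := ((hsq.const_mul (1/2 : ℝ)).add (hVrc.const_mul (d * k2))).add
      (hintc.const_mul (d * k1))
  have hmain : HasDerivAt
      (fun s => (1 / 2) * ((ebx x y θ xT yT s) ^ 2 + (eby x y θ xT yT d s) ^ 2) +
        d * k2 * Vr (d - ri) (ro - d) (rng x y xT yT s - d) +
        d * k1 * ∫ τ in (0 : ℝ)..(beta x y z κ xT yT s), Ω τ)
      (-(d * κ * k1 * beta x y z κ xT yT t * Ω (beta x y z κ xT yT t))) t := by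
    refine htotal.congr_deriv ?_
    simp only [beta, ← hrdef, hθT, pow_one]
    set E := eta (d - ri) (ro - d) (r - d)
    set W := Ω (-κ * z t + 1 / 2 * r ^ 2)
    set ex := ebx x y θ xT yT t
    set ey := eby x y θ xT yT d t
    field_simp
    ring
  refine ⟨hmain, ?_⟩
  have hB : 0 ≤ beta x y z κ xT yT t * Ω (beta x y z κ xT yT t) := by
    rcases eq_or_ne (beta x y z κ xT yT t) 0 with h0 | h0
    · rw [h0, hΩ0]; simp
    · exact le_of_lt (hΩpos _ h0)
  have : 0 ≤ d * κ * k1 * beta x y z κ xT yT t * Ω (beta x y z κ xT yT t) := by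
    have h1 : 0 ≤ (d * κ * k1) * (beta x y z κ xT yT t * Ω (beta x y z κ xT yT t)) :=
      mul_nonneg (by positivity) hB
    linarith [h1, (by ring : (d * κ * k1) * (beta x y z κ xT yT t * Ω (beta x y z κ xT yT t)) =
      d * κ * k1 * beta x y z κ xT yT t * Ω (beta x y z κ xT yT t))]
  linarith
end
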